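/- arXiv:2005.02039 — 3 statements merged into one kernel-verified Lean document; each statement's English description precedes it below -/
import Mathlib

section
/- Let O : ℝ^{n_p} → ℝ^{n_y} and M : ℝ^{n_u} × ℝ^{n_p} → ℝ^{n_w} be continuous maps, let R₁ : ℝ^{n_u} → ℝ and R₂ : ℝ^{n_p} → ℝ be continuous, let α₁, α₂ > 0, let Γ_obs ∈ ℝ^{n_y×n_y} and Γ̂ ∈ ℝ^{n_w×n_w} be symmetric positive definite, let y ∈ ℝ^{n_y}, and assume the feasible set {(u,p) : M(u,p) = 0} is nonempty. Let (λ_k)_{k∈ℕ} ⊂ ℝ₊ be strictly monotonically increasing with λ_k → ∞, and for each k let (u_k, p_k) be a global minimizer of (u,p) ↦ ½‖O(p) − y‖²_{Γ_obs} + (λ_k/2)‖M(u,p)‖²_{Γ̂} + α₁R₁(u) + α₂R₂(p). Then every accumulation point of the sequence (u_k, p_k) is a global minimizer of ½‖O(p) − y‖²_{Γ_obs} + α₁R₁(u) + α₂R₂(p) subject to the constraint M(u,p) = 0. -/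
open Matrix Filter
open Topology

noncomputable def wsq {ι : Type*} [Fintype ι] [DecidableEq ι]
    (A : Matrix ι ι ℝ) (x : ι → ℝ) : ℝ :=
  x ⬝ᵥ (A⁻¹ *ᵥ x)

lemma wsq_nonneg {ι : Type*} [Fintype ι] [DecidableEq ι]
    {A : Matrix ι ι ℝ} (hA : A.PosDef) (v : ι → ℝ) : 0 ≤ wsq A v := by
  have := (hA.inv.posSemidef).re_dotProduct_nonneg v
  simpa [wsq] using this

lemma wsq_pos {ι : Type*} [Fintype ι] [DecidableEq ι]
    {A : Matrix ι ι ℝ} (hA : A.PosDef) {v : ι → ℝ} (hv : v ≠ 0) : 0 < wsq A v := by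
  have := hA.inv.re_dotProduct_pos hv
  simpa [wsq] using this

lemma wsq_continuous {ι : Type*} [Fintype ι] [DecidableEq ι]
    (A : Matrix ι ι ℝ) : Continuous (wsq A) :=
  continuous_id.dotProduct ((continuous_const (y := A⁻¹)).matrix_mulVec continuous_id)

/-- Penalty method convergence (Proposition 1): every accumulation point of the
sequence of global minimizers of the penalized problems with `λ_k → ∞` is a
global minimizer of the constrained problem. -/
theorem penalty_method_accumulation_point
    {nu np nw ny : ℕ}
    (O : (Fin np → ℝ) → (Fin ny → ℝ))
    (M : (Fin nu → ℝ) × (Fin np → ℝ) → (Fin nw → ℝ))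
    (hO : Continuous O) (hM : Continuous M)
    (R₁ : (Fin nu → ℝ) → ℝ) (R₂ : (Fin np → ℝ) → ℝ)
    (hR₁ : Continuous R₁) (hR₂ : Continuous R₂)
    (α₁ α₂ : ℝ) (hα₁ : 0 < α₁) (hα₂ : 0 < α₂)
    (Γobs : Matrix (Fin ny) (Fin ny) ℝ) (Γhat : Matrix (Fin nw) (Fin nw) ℝ)
    (hΓobs : Γobs.PosDef) (hΓhat : Γhat.PosDef)
    (y : Fin ny → ℝ)
    (hfeas : ∃ z : (Fin nu → ℝ) × (Fin np → ℝ), M z = 0)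
    (lam : ℕ → ℝ) (hlampos : ∀ k, 0 < lam k) (hlammono : StrictMono lam)
    (hlamtop : Tendsto lam atTop atTop)
    (x : ℕ → (Fin nu → ℝ) × (Fin np → ℝ))
    (hmin : ∀ k, ∀ z : (Fin nu → ℝ) × (Fin np → ℝ),
      (1/2) * wsq Γobs (O (x k).2 - y) + (lam k / 2) * wsq Γhat (M (x k))
        + α₁ * R₁ (x k).1 + α₂ * R₂ (x k).2
      ≤ (1/2) * wsq Γobs (O z.2 - y) + (lam k / 2) * wsq Γhat (M z)
        + α₁ * R₁ z.1 + α₂ * R₂ z.2)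
    (xbar : (Fin nu → ℝ) × (Fin np → ℝ))
    (hacc : MapClusterPt xbar atTop x) :
    M xbar = 0 ∧
      ∀ z : (Fin nu → ℝ) × (Fin np → ℝ), M z = 0 →
        (1/2) * wsq Γobs (O xbar.2 - y) + α₁ * R₁ xbar.1 + α₂ * R₂ xbar.2
          ≤ (1/2) * wsq Γobs (O z.2 - y) + α₁ * R₁ z.1 + α₂ * R₂ z.2 := by
  obtain ⟨z₀, hz₀⟩ := hfeas
  obtain ⟨ψ, hψmono, hψtend⟩ := TopologicalSpace.FirstCountableTopology.tendsto_subseq hacc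
  set F : (Fin nu → ℝ) × (Fin np → ℝ) → ℝ :=
    fun z => (1/2) * wsq Γobs (O z.2 - y) + α₁ * R₁ z.1 + α₂ * R₂ z.2 with hFdef
  have hFcont : Continuous F := by
    refine ((Continuous.add ?_ ?_).add ?_)
    · exact continuous_const.mul ((wsq_continuous Γobs).comp
        ((hO.comp continuous_snd).sub continuous_const))
    · exact continuous_const.mul (hR₁.comp continuous_fst)
    · exact continuous_const.mul (hR₂.comp continuous_snd)
  have hwsq0 : wsq Γhat (0 : Fin nw → ℝ) = 0 := by simp [wsq]
  -- bound from feasible point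
  have hbd : ∀ k, F (x k) + (lam k / 2) * wsq Γhat (M (x k)) ≤ F z₀ := by
    intro k
    have := hmin k z₀
    rw [hz₀, hwsq0] at this
    simp only [hFdef]
    linarith
  have hFtend : Tendsto (fun j => F (x (ψ j))) atTop (𝓝 (F xbar)) :=
    (hFcont.tendsto xbar).comp hψtend
  -- part 1: M xbar = 0
  have hMxbar : M xbar = 0 := by
    by_contra hne
    have hc : 0 < wsq Γhat (M xbar) := wsq_pos hΓhat hne
    have hPtend : Tendsto (fun j => wsq Γhat (M (x (ψ j)))) atTop (𝓝 (wsq Γhat (M xbar))) :=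
      (((wsq_continuous Γhat).comp hM).tendsto xbar).comp hψtend
    have hlamψ : Tendsto (fun j => lam (ψ j) / 2) atTop atTop :=
      (hlamtop.comp hψmono.tendsto_atTop).atTop_div_const two_pos
    have hgev : ∀ᶠ j in atTop, wsq Γhat (M xbar) / 2 < wsq Γhat (M (x (ψ j))) :=
      hPtend.eventually (eventually_gt_nhds (half_lt_self hc))
    have htop : Tendsto (fun j => (lam (ψ j) / 2) * wsq Γhat (M (x (ψ j)))) atTop atTop := by
      refine tendsto_atTop_mono' atTop ?_ (hlamψ.atTop_mul_const (half_pos hc))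
      filter_upwards [hgev] with j hj
      have hl : 0 < lam (ψ j) / 2 := by linarith [hlampos (ψ j)]
      nlinarith
    have hle : ∀ j, (lam (ψ j) / 2) * wsq Γhat (M (x (ψ j))) ≤ F z₀ - F (x (ψ j)) := by
      intro j; have := hbd (ψ j); linarith
    have : Tendsto (fun j => F z₀ - F (x (ψ j))) atTop atTop :=
      tendsto_atTop_mono hle htop
    exact not_tendsto_atTop_of_tendsto_nhds
      (tendsto_const_nhds.sub hFtend) this
  refine ⟨hMxbar, fun z hz => ?_⟩
  have hkey : ∀ k, F (x k) ≤ F z := by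
    intro k
    have h1 := hmin k z
    rw [hz, hwsq0] at h1
    have h2 : 0 ≤ (lam k / 2) * wsq Γhat (M (x k)) :=
      mul_nonneg (by linarith [hlampos k]) (wsq_nonneg hΓhat _)
    simp only [hFdef]
    linarith
  exact le_of_tendsto hFtend (Eventually.of_forall fun j => hkey (ψ j))
end

section
/- Let A ∈ ℝ^{m×n}, let Γ ∈ ℝ^{m×m} and C₀ ∈ ℝ^{n×n} be symmetric positive definite, let y ∈ ℝᵐ and v₀ ∈ ℝⁿ. Define C(t) := (C₀⁻¹ + t AᵀΓ⁻¹A)⁻¹ and m(t) := C(t)(t AᵀΓ⁻¹y + C₀⁻¹v₀) for t ≥ 0. Then m(0) = v₀ and m satisfies the differential equation dm(t)/dt = −C(t) AᵀΓ⁻¹ (A m(t) − y) for all t ≥ 0. -/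
open Matrix

attribute [local instance] Matrix.linftyOpNormedRing Matrix.linftyOpNormedAlgebra

/-- Entry evaluation as a continuous linear map. -/
private noncomputable def entryCLM {n : ℕ} (i j : Fin n) :
    Matrix (Fin n) (Fin n) ℝ →L[ℝ] ℝ :=
  LinearMap.toContinuousLinearMap
    { toFun := fun M => M i j
      map_add' := fun _ _ => rfl
      map_smul' := fun _ _ => rfl }

/-- In the mean-field limit of ensemble Kalman inversion for a linear forward
operator, the mean `m(t) = C(t)(t AᵀΓ⁻¹y + C₀⁻¹v₀)` with
`C(t) = (C₀⁻¹ + t AᵀΓ⁻¹A)⁻¹` satisfies `m(0) = v₀` and the mean-field ODE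
`dm/dt = −C(t) AᵀΓ⁻¹(A m(t) − y)` for all `t ≥ 0`. -/
theorem eki_mean_ode
    {m n : ℕ} (A : Matrix (Fin m) (Fin n) ℝ)
    (Γ : Matrix (Fin m) (Fin m) ℝ) (C₀ : Matrix (Fin n) (Fin n) ℝ)
    (hΓ : Γ.PosDef) (hC₀ : C₀.PosDef)
    (y : Fin m → ℝ) (v₀ : Fin n → ℝ)
    (C : ℝ → Matrix (Fin n) (Fin n) ℝ)
    (hC : ∀ t : ℝ, C t = (C₀⁻¹ + t • (Aᵀ * Γ⁻¹ * A))⁻¹)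
    (mfun : ℝ → Fin n → ℝ)
    (hm : ∀ t : ℝ, mfun t = C t *ᵥ (t • ((Aᵀ * Γ⁻¹) *ᵥ y) + C₀⁻¹ *ᵥ v₀)) :
    mfun 0 = v₀ ∧
    ∀ t : ℝ, 0 ≤ t →
      HasDerivAt mfun (-(C t *ᵥ ((Aᵀ * Γ⁻¹) *ᵥ (A *ᵥ mfun t - y)))) t := by
  classical
  set S : Matrix (Fin n) (Fin n) ℝ := Aᵀ * Γ⁻¹ * A with hSdef
  set b : Fin n → ℝ := (Aᵀ * Γ⁻¹) *ᵥ y with hbdef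
  set c : Fin n → ℝ := C₀⁻¹ *ᵥ v₀ with hcdef
  have hC₀inv : (C₀⁻¹).PosDef := hC₀.inv
  -- S is positive semidefinite
  have hSpsd : S.PosSemidef := by
    have := (hΓ.inv.posSemidef).conjTranspose_mul_mul_same A
    rwa [conjTranspose_eq_transpose_of_trivial] at this
  -- B t := C₀⁻¹ + t • S is positive definite for t ≥ 0
  have hBpos : ∀ t : ℝ, 0 ≤ t → (C₀⁻¹ + t • S).PosDef := by
    intro t ht
    refine hC₀inv.add_posSemidef ⟨?_, ?_⟩
    · unfold Matrix.IsHermitian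
      rw [conjTranspose_smul, hSpsd.1.eq]
      simp
    · intro x
      have := hSpsd.2 x
      have h2 : (x.sum fun i xi => x.sum fun j xj => star xi * (t • S) i j * xj) =
          t * (x.sum fun i xi => x.sum fun j xj => star xi * S i j * xj) := by
        simp only [Finsupp.sum, Matrix.smul_apply, smul_eq_mul, Finset.mul_sum]
        exact Finset.sum_congr rfl fun i _ => Finset.sum_congr rfl fun j _ => by ring
      rw [h2]
      positivity
  -- first claim: mfun 0 = v₀
  have h0 : mfun 0 = v₀ := by
    have hCu : IsUnit C₀.det := hC₀.det_pos.ne'.isUnit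
    rw [hm 0, hC 0]
    simp only [zero_smul, add_zero, zero_add]
    rw [nonsing_inv_nonsing_inv _ hCu, mulVec_mulVec, mul_nonsing_inv _ hCu, one_mulVec]
  refine ⟨h0, fun t ht => ?_⟩
  -- derivative of C
  have hBunit : IsUnit (C₀⁻¹ + t • S) := (hBpos t ht).isUnit
  have hBderiv : HasDerivAt (fun s : ℝ => C₀⁻¹ + s • S) S t := by
    have := ((hasDerivAt_id t).smul_const S).const_add (C₀⁻¹)
    simp only [id, one_smul] at this
    exact this
  have hCt : C t = Ring.inverse (C₀⁻¹ + t • S) := by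
    rw [hC t, nonsing_inv_eq_ringInverse]
  have hCderiv : HasDerivAt C (-(C t * S * C t)) t := by
    have hfun : C = fun s : ℝ => Ring.inverse (C₀⁻¹ + s • S) := by
      funext s
      rw [hC s, nonsing_inv_eq_ringInverse]
    obtain ⟨u, hu⟩ := hBunit
    have hinv := hasFDerivAt_ringInverse (𝕜 := ℝ) u
    rw [hu] at hinv
    have hcomp := hinv.comp_hasDerivAt t hBderiv
    have hval : (↑u⁻¹ : Matrix (Fin n) (Fin n) ℝ) = C t := by
      rw [hCt, ← hu, Ring.inverse_unit]
    rw [hfun]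
    refine HasDerivAt.congr_deriv hcomp ?_
    simp [ContinuousLinearMap.mulLeftRight_apply, hval, Function.comp, mul_assoc, ← hCt]
  -- derivative of mfun, componentwise
  set w : ℝ → Fin n → ℝ := fun s => s • b + c with hwdef
  have hmw : mfun = fun s => C s *ᵥ w s := by
    funext s; rw [hm s]
  have key : HasDerivAt mfun ((-(C t * S * C t)) *ᵥ w t + C t *ᵥ b) t := by
    rw [hmw]
    rw [hasDerivAt_pi]
    intro i
    have hcomp : (fun s : ℝ => (C s *ᵥ w s) i) =
        fun s : ℝ => ∑ j, C s i j * w s j := by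
      funext s; simp [Matrix.mulVec, dotProduct]
    have htarget : ((-(C t * S * C t)) *ᵥ w t + C t *ᵥ b) i =
        ∑ j, ((-(C t * S * C t)) i j * w t j + C t i j * b j) := by
      simp [Matrix.mulVec, dotProduct, Finset.sum_add_distrib]
    rw [hcomp, htarget]
    refine HasDerivAt.fun_sum fun j _ => ?_
    have hCij : HasDerivAt (fun s : ℝ => C s i j) ((-(C t * S * C t)) i j) t := by
      have := ((entryCLM i j).hasFDerivAt.comp_hasDerivAt t hCderiv)
      exact this
    have hwj : HasDerivAt (fun s : ℝ => w s j) (b j) t := by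
      have : HasDerivAt (fun s : ℝ => s * b j + c j) (b j) t := by
        simpa using ((hasDerivAt_id t).mul_const (b j)).add_const (c j)
      simpa [hwdef] using this
    exact hCij.mul hwj
  -- identify the derivative with the claimed expression
  have halg : -(C t *ᵥ ((Aᵀ * Γ⁻¹) *ᵥ (A *ᵥ mfun t - y))) =
      (-(C t * S * C t)) *ᵥ w t + C t *ᵥ b := by
    have hmt : mfun t = C t *ᵥ w t := by rw [hm t]
    rw [hmt]
    simp only [hSdef, hbdef, mulVec_sub, neg_mulVec, ← mulVec_mulVec]
    abel
  rw [halg]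
  exact key
end

section
/- Let A ∈ ℝ^{m×n}, let Γ ∈ ℝ^{m×m} and C₀ ∈ ℝ^{n×n} be symmetric positive definite, let y ∈ ℝᵐ and v₀ ∈ ℝⁿ, and assume AᵀΓ⁻¹A is positive definite. Then the mean m(t) := (C₀⁻¹ + t AᵀΓ⁻¹A)⁻¹(t AᵀΓ⁻¹y + C₀⁻¹v₀) converges as t → ∞ to v∞ := (AᵀΓ⁻¹A)⁻¹AᵀΓ⁻¹y, and v∞ is the unique global minimizer of the data misfit v ↦ ½‖Av − y‖²_Γ over ℝⁿ. -/
open Matrix Filter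

private lemma posDef_smul' {n : ℕ} {B : Matrix (Fin n) (Fin n) ℝ} (hB : B.PosDef)
    {t : ℝ} (ht : 0 < t) : (t • B).PosDef := by
  constructor
  · unfold Matrix.IsHermitian
    rw [conjTranspose_smul, hB.1]; simp
  · intro x hx
    have := hB.2 hx
    simpa [Finsupp.sum, Finset.mul_sum, mul_assoc, mul_left_comm] using mul_pos ht this

private lemma transp_dot {m n : ℕ} (A : Matrix (Fin m) (Fin n) ℝ) (x : Fin n → ℝ)
    (w : Fin m → ℝ) : (A *ᵥ x) ⬝ᵥ w = x ⬝ᵥ (Aᵀ *ᵥ w) := by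
  rw [dotProduct_comm, dotProduct_mulVec, ← mulVec_transpose, dotProduct_comm]

/-- The mean `m(t) = (C₀⁻¹ + t AᵀΓ⁻¹A)⁻¹(t AᵀΓ⁻¹y + C₀⁻¹v₀)` of the mean-field
ensemble Kalman inversion converges, as `t → ∞`, to
`v∞ = (AᵀΓ⁻¹A)⁻¹AᵀΓ⁻¹y`, the unique global minimizer of the data misfit
`v ↦ ½‖Av − y‖²_Γ`. -/
theorem eki_mean_tendsto_least_squares
    {m n : ℕ} (A : Matrix (Fin m) (Fin n) ℝ)
    (Γ : Matrix (Fin m) (Fin m) ℝ) (C₀ : Matrix (Fin n) (Fin n) ℝ)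
    (hΓ : Γ.PosDef) (hC₀ : C₀.PosDef)
    (y : Fin m → ℝ) (v₀ : Fin n → ℝ)
    (hA : (Aᵀ * Γ⁻¹ * A).PosDef)
    (mfun : ℝ → Fin n → ℝ)
    (hm : ∀ t : ℝ, mfun t =
      (C₀⁻¹ + t • (Aᵀ * Γ⁻¹ * A))⁻¹ *ᵥ (t • ((Aᵀ * Γ⁻¹) *ᵥ y) + C₀⁻¹ *ᵥ v₀))
    (vinf : Fin n → ℝ)
    (hvinf : vinf = (Aᵀ * Γ⁻¹ * A)⁻¹ *ᵥ ((Aᵀ * Γ⁻¹) *ᵥ y)) :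
    Tendsto mfun atTop (nhds vinf) ∧
    (∀ v : Fin n → ℝ, (1/2) * wsq Γ (A *ᵥ vinf - y) ≤ (1/2) * wsq Γ (A *ᵥ v - y)) ∧
    (∀ v : Fin n → ℝ,
      (∀ w : Fin n → ℝ, (1/2) * wsq Γ (A *ᵥ v - y) ≤ (1/2) * wsq Γ (A *ᵥ w - y)) →
        v = vinf) := by
  set B : Matrix (Fin n) (Fin n) ℝ := Aᵀ * Γ⁻¹ * A with hBdef
  set b : Fin n → ℝ := (Aᵀ * Γ⁻¹) *ᵥ y with hbdef
  have hBdet : IsUnit B.det := isUnit_iff_ne_zero.2 hA.det_pos.ne'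
  have hBvinf : B *ᵥ vinf = b := by
    rw [hvinf, mulVec_mulVec, Matrix.mul_nonsing_inv _ hBdet, one_mulVec]
  -- Γ⁻¹ is symmetric
  have hΓsym : Γ⁻¹ᵀ = Γ⁻¹ := by
    have h := hΓ.inv.1
    rw [Matrix.IsHermitian, conjTranspose] at h
    ext i j; have := congrFun (congrFun h i) j; simpa using this
  -- orthogonality of the residual
  have horth : (Aᵀ * Γ⁻¹) *ᵥ (A *ᵥ vinf - y) = 0 := by
    rw [mulVec_sub, mulVec_mulVec, ← hBdef, hBvinf, ← hbdef, sub_self]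
  -- the key quadratic expansion
  have key : ∀ v : Fin n → ℝ, wsq Γ (A *ᵥ v - y)
      = wsq Γ (A *ᵥ vinf - y) + (v - vinf) ⬝ᵥ (B *ᵥ (v - vinf)) := by
    intro v
    set d := v - vinf with hd
    set r := A *ᵥ vinf - y with hr
    have hsplit : A *ᵥ v - y = A *ᵥ d + r := by
      rw [hd, hr, mulVec_sub]; abel
    have cross : ∀ z : Fin m → ℝ, (A *ᵥ d) ⬝ᵥ (Γ⁻¹ *ᵥ z) = d ⬝ᵥ ((Aᵀ * Γ⁻¹) *ᵥ z) := by
      intro z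
      rw [transp_dot, mulVec_mulVec]
    have hsym_dot : ∀ u w : Fin m → ℝ, u ⬝ᵥ (Γ⁻¹ *ᵥ w) = w ⬝ᵥ (Γ⁻¹ *ᵥ u) := by
      intro u w
      have h := transp_dot Γ⁻¹ u w
      rw [hΓsym] at h
      rw [← h, dotProduct_comm]
    rw [wsq, wsq, hsplit]
    rw [mulVec_add, dotProduct_add, add_dotProduct, add_dotProduct]
    have h1 : (A *ᵥ d) ⬝ᵥ (Γ⁻¹ *ᵥ r) = 0 := by rw [cross, horth, dotProduct_zero]
    have h2 : r ⬝ᵥ (Γ⁻¹ *ᵥ (A *ᵥ d)) = 0 := by rw [hsym_dot r (A *ᵥ d), h1]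
    have h3 : (A *ᵥ d) ⬝ᵥ (Γ⁻¹ *ᵥ (A *ᵥ d)) = d ⬝ᵥ (B *ᵥ d) := by
      rw [cross, mulVec_mulVec, ← hBdef]
    rw [h1, h2, h3]
    ring
  have hquad_nonneg : ∀ x : Fin n → ℝ, 0 ≤ x ⬝ᵥ (B *ᵥ x) := by
    intro x
    rcases eq_or_ne x 0 with h | h
    · simp [h]
    · have := hA.dotProduct_mulVec_pos h
      simpa using this.le
  refine ⟨?_, ?_, ?_⟩
  · -- convergence
    have hfun : ∀ᶠ t in atTop, mfun t
        = (t⁻¹ • C₀⁻¹ + B)⁻¹ *ᵥ (b + t⁻¹ • (C₀⁻¹ *ᵥ v₀)) := by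
      filter_upwards [eventually_gt_atTop (0:ℝ)] with t ht
      have hN : (t⁻¹ • C₀⁻¹ + B).PosDef :=
        (posDef_smul' hC₀.inv (inv_pos.2 ht)).add hA
      have hNdet : IsUnit (t⁻¹ • C₀⁻¹ + B).det := isUnit_iff_ne_zero.2 hN.det_pos.ne'
      have hM : C₀⁻¹ + t • B = t • (t⁻¹ • C₀⁻¹ + B) := by
        rw [smul_add, smul_smul, mul_inv_cancel₀ ht.ne', one_smul]
      haveI : Invertible t := invertibleOfNonzero ht.ne'
      rw [hm t, hM, Matrix.inv_smul (t⁻¹ • C₀⁻¹ + B) t hNdet, invOf_eq_inv t,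
        smul_mulVec, mulVec_add, mulVec_smul]
      rw [smul_add, smul_smul, inv_mul_cancel₀ ht.ne', one_smul,
        mulVec_add, mulVec_smul]
    have h1 : Tendsto (fun t : ℝ => t⁻¹ • C₀⁻¹ + B) atTop (nhds B) := by
      have h0 : Tendsto (fun t : ℝ => t⁻¹ • C₀⁻¹) atTop
          (nhds ((0:ℝ) • C₀⁻¹)) := tendsto_inv_atTop_zero.smul_const C₀⁻¹
      rw [zero_smul] at h0
      simpa using h0.add tendsto_const_nhds
    have hcont : ContinuousAt Inv.inv B := by
      apply continuousAt_matrix_inv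
      rw [Ring.inverse_eq_inv']
      exact continuousAt_inv₀ (isUnit_iff_ne_zero.1 hBdet)
    have h2 : Tendsto (fun t : ℝ => (t⁻¹ • C₀⁻¹ + B)⁻¹) atTop (nhds B⁻¹) :=
      hcont.tendsto.comp h1
    have h3 : Tendsto (fun t : ℝ => b + t⁻¹ • (C₀⁻¹ *ᵥ v₀)) atTop (nhds b) := by
      have h0 : Tendsto (fun t : ℝ => t⁻¹ • (C₀⁻¹ *ᵥ v₀)) atTop
          (nhds ((0:ℝ) • (C₀⁻¹ *ᵥ v₀))) := tendsto_inv_atTop_zero.smul_const _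
      rw [zero_smul] at h0
      simpa using (tendsto_const_nhds (x := b)).add h0
    have hF : Continuous fun p : Matrix (Fin n) (Fin n) ℝ × (Fin n → ℝ) => p.1 *ᵥ p.2 :=
      continuous_fst.matrix_mulVec continuous_snd
    have h4 : Tendsto (fun t : ℝ => (t⁻¹ • C₀⁻¹ + B)⁻¹ *ᵥ (b + t⁻¹ • (C₀⁻¹ *ᵥ v₀)))
        atTop (nhds (B⁻¹ *ᵥ b)) :=
      (hF.continuousAt.tendsto).comp (h2.prodMk_nhds h3)
    rw [hvinf]
    exact Tendsto.congr' (Filter.EventuallyEq.symm hfun) h4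
  · intro v
    have := hquad_nonneg (v - vinf)
    have hk := key v
    nlinarith [hk, this]
  · intro v hv
    have h1 := hv vinf
    have h2 : wsq Γ (A *ᵥ v - y) ≤ wsq Γ (A *ᵥ vinf - y) := by linarith
    have h3 := key v
    have h4 : (v - vinf) ⬝ᵥ (B *ᵥ (v - vinf)) ≤ 0 := by linarith
    by_contra hne
    have hd : v - vinf ≠ 0 := sub_ne_zero.2 hne
    have := hA.dotProduct_mulVec_pos hd
    simp only [star_trivial] at this
    linarith
end
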